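/- If N_0 is chosen sufficiently large, then every y ∈ E_{M,θ}(α) satisfies ℓ_{n_j}(y) ≤ 2^{2j+5} for all j ≥ N_0. -/

import Mathlib

open Filter Real

noncomputable section

/-- The generalized Gauss map `T_θ`. -/
def gaussMap (θ : ℝ) (x : ℝ) : ℝ := if x = 0 then 0 else 1 / x - θ * ⌊1 / (θ * x)⌋

/-- The `n`-th digit (1-indexed) of the θ-expansion of `x`: `ℓ_n(x) = ⌊1/(θ·T_θ^{n−1}(x))⌋`. -/
def digit (θ : ℝ) (x : ℝ) (n : ℕ) : ℤ := ⌊1 / (θ * (gaussMap θ)^[n - 1] x)⌋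

/-- `S_{n,θ}(x)`, the sum of the first `n` digits. -/
def Sdig (θ : ℝ) (x : ℝ) (n : ℕ) : ℤ := ∑ k ∈ Finset.Icc 1 n, digit θ x k

/-- `L_{n,θ}(x)`, the maximum of the first `n` digits. -/
def Ldig (θ : ℝ) (x : ℝ) (n : ℕ) : ℤ :=
  if h : 1 ≤ n then (Finset.Icc 1 n).sup' (Finset.nonempty_Icc.mpr h) (digit θ x) else 0

/-- The ratio `L_{n,θ}(x)·log n·log log n / (S_{n,θ}(x) − L_{n,θ}(x))`. -/
def ratioFun (θ : ℝ) (x : ℝ) (n : ℕ) : ℝ :=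
  ((Ldig θ x n : ℝ) * Real.log n * Real.log (Real.log n)) /
    ((Sdig θ x n : ℝ) - (Ldig θ x n : ℝ))

/-- The level set `E_θ(α)` of irrationals in `[0,θ]` where the ratio tends to `α`. -/
def Eset (θ α : ℝ) : Set ℝ :=
  {x | x ∈ Set.Icc 0 θ ∧ Irrational x ∧
    Tendsto (fun n => ratioFun θ x n) atTop (nhds α)}

/-- The sparse sequence `n_k = ⌊exp(k^{3/4})⌋`. -/
def sparseSeq (k : ℕ) : ℕ := ⌊Real.exp ((k : ℝ) ^ ((3 : ℝ) / 4))⌋₊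

/-- The technical conditions (A), (B), (C) on the cutoff `N0`, required to hold
for every `k ≥ N0`. -/
def N0Cond (α : ℝ) (m M : ℕ) (N0 : ℕ) : Prop :=
  ∀ k : ℕ, N0 ≤ k →
    (α * m * ((sparseSeq k : ℝ) - 1) /
        (Real.log (sparseSeq k) * Real.log (Real.log (sparseSeq k))) > (M : ℝ) + 1) ∧
    (Real.log (sparseSeq (k + 1)) * Real.log (Real.log (sparseSeq (k + 1))) -
        Real.log (sparseSeq k) * Real.log (Real.log (sparseSeq k)) < α / 2) ∧
    ((sparseSeq (k + 1) : ℝ) - (sparseSeq k : ℝ) <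
        (sparseSeq k : ℝ) / (k : ℝ) ^ ((1 : ℝ) / 8))

/-- `i` is one of the insertion positions `n_k`, `k ≥ N0`. -/
def insertedPos (N0 : ℕ) (i : ℕ) : Prop := ∃ k : ℕ, N0 ≤ k ∧ i = sparseSeq k

/-- The constructed set `E_{M,θ}(α)`: irrationals in `[0,θ]` whose digit at each
insertion position `n_k` (`k ≥ N0`) equals
`⌊α·(Σ_{i=1}^{n_k−1} ℓ_i(x)) / (log n_k · log log n_k)⌋`, and whose digits at all
other positions lie in `[m, M]`. -/
def EMset (θ α : ℝ) (m M N0 : ℕ) : Set ℝ :=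
  {x | x ∈ Set.Icc 0 θ ∧ Irrational x ∧
    (∀ k : ℕ, N0 ≤ k →
      digit θ x (sparseSeq k) =
        ⌊α * (∑ i ∈ Finset.Icc 1 (sparseSeq k - 1), (digit θ x i : ℝ)) /
          (Real.log (sparseSeq k) * Real.log (Real.log (sparseSeq k)))⌋) ∧
    (∀ i : ℕ, 1 ≤ i → ¬ insertedPos N0 i →
      (m : ℤ) ≤ digit θ x i ∧ digit θ x i ≤ (M : ℤ))}

-- auxiliary lemmas
private lemma sparseSeq_mono : Monotone sparseSeq := fun a b h =>
  Nat.floor_mono (Real.exp_le_exp.mpr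
    (Real.rpow_le_rpow (Nat.cast_nonneg a) (Nat.cast_le.mpr h) (by norm_num)))

private lemma sum_image_le_aux (s : Finset ℕ) (f : ℕ → ℕ) (g : ℕ → ℝ) :
    (∀ k ∈ s, 0 ≤ g (f k)) → ∑ i ∈ s.image f, g i ≤ ∑ k ∈ s, g (f k) := by
  classical
  induction s using Finset.induction_on with
  | empty => simp
  | insert _ _ ha ih =>
    rename_i a s
    intro hg
    rw [Finset.image_insert, Finset.sum_insert ha]
    by_cases hfa : f a ∈ s.image f
    · rw [Finset.insert_eq_self.mpr hfa]
      have h1 := ih (fun k hk => hg k (Finset.mem_insert_of_mem hk))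
      have h2 := hg a (Finset.mem_insert_self a s)
      linarith
    · rw [Finset.sum_insert hfa]
      exact add_le_add_right (ih (fun k hk => hg k (Finset.mem_insert_of_mem hk))) _

set_option maxHeartbeats 1000000 in
/-- if `N0` is chosen sufficiently large, then every `y ∈ E_{M,θ}(α)`
satisfies `ℓ_{n_j}(y) ≤ 2^{2j+5}` for all `j ≥ N0`. -/
theorem inserted_digits_growth_bound (θ : ℝ) (m : ℕ) (hm : 0 < m) (hmns : ¬ IsSquare m)
    (hθ : θ ∈ Set.Ioo (0 : ℝ) 1) (hθirr : Irrational θ) (hθ2 : θ ^ 2 = 1 / m)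
    (α : ℝ) (hα : 0 < α) (M : ℕ) (hM : 2 * m + 1 < M) :
    ∃ N1 : ℕ, ∀ N0 : ℕ, N1 ≤ N0 → N0Cond α m M N0 →
      ∀ y ∈ EMset θ α m M N0, ∀ j : ℕ, N0 ≤ j →
        digit θ y (sparseSeq j) ≤ 2 ^ (2 * j + 5) := by
  classical
  set C : ℝ := α * (M + 11) + 3 with hCdef
  have hC3 : (3:ℝ) ≤ C := le_add_of_nonneg_left (by positivity)
  obtain ⟨N1, hN1⟩ := exists_nat_ge ((2*C+2)^2)
  refine ⟨N1, ?_⟩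
  intro N0 hN0 _hcond y hy j hj
  obtain ⟨hyIcc, hyirr, hins, hbnd⟩ := hy
  have key : ∀ j : ℕ, N0 ≤ j → 0 ≤ digit θ y (sparseSeq j) ∧
      (digit θ y (sparseSeq j) : ℝ) ≤ 2 ^ (2*j+5) := by
    intro j
    induction j using Nat.strong_induction_on with
    | _ j IH =>
    intro hjN0
    -- analytic estimates on n = sparseSeq j
    have hjN1 : (N1:ℝ) ≤ (j:ℝ) := Nat.cast_le.mpr (le_trans hN0 hjN0)
    have hjR : (2*C+2)^2 ≤ (j:ℝ) := le_trans hN1 hjN1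
    have h2C2 : (0:ℝ) ≤ 2*C+2 := by linarith
    have hj1 : (1:ℝ) ≤ (j:ℝ) := by nlinarith
    set t : ℝ := (j:ℝ) ^ ((3:ℝ)/4) with ht
    have hsq : 2*C+2 ≤ Real.sqrt (j:ℝ) := by
      have h := Real.sq_sqrt (le_trans (by positivity) hjR)
      nlinarith [Real.sqrt_nonneg (j:ℝ)]
    have hsqt : Real.sqrt (j:ℝ) ≤ t := by
      rw [Real.sqrt_eq_rpow]
      exact Real.rpow_le_rpow_of_exponent_le hj1 (by norm_num)
    have htC : 2*C+2 ≤ t := le_trans hsq hsqt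
    have htj : t ≤ (j:ℝ) := by
      calc t ≤ (j:ℝ) ^ (1:ℝ) := Real.rpow_le_rpow_of_exponent_le hj1 (by norm_num)
        _ = (j:ℝ) := Real.rpow_one _
    set n := sparseSeq j with hn
    have hexpt : t + 1 ≤ Real.exp t := Real.add_one_le_exp t
    have he2 : (2:ℝ) ≤ Real.exp 1 := by
      have := Real.add_one_le_exp (1:ℝ); linarith
    have he3 : Real.exp 1 ≤ (3:ℝ) := by
      have := Real.exp_one_lt_d9; linarith
    have hnlow : Real.exp (t - 1) ≤ (n:ℝ) := by
      have h1 : Real.exp t - 1 < (n:ℝ) := Nat.sub_one_lt_floor _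
      have h2 : Real.exp (t-1) ≤ Real.exp t - 1 := by
        rw [Real.exp_sub, div_le_iff₀ (Real.exp_pos 1)]
        have ha9 : (9:ℝ) ≤ Real.exp t := by linarith
        nlinarith [mul_nonneg (by linarith : (0:ℝ) ≤ Real.exp t - 9)
          (by linarith : (0:ℝ) ≤ Real.exp 1 - 2)]
      linarith
    have hnpos : (0:ℝ) < (n:ℝ) := lt_of_lt_of_le (Real.exp_pos _) hnlow
    have hn1 : 1 ≤ n := by exact_mod_cast Nat.one_le_iff_ne_zero.mpr (by
      intro h0; rw [h0] at hnpos; simp at hnpos)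
    have hlogn : t - 1 ≤ Real.log (n:ℝ) := by
      calc t - 1 = Real.log (Real.exp (t-1)) := (Real.log_exp _).symm
        _ ≤ Real.log (n:ℝ) := Real.log_le_log (Real.exp_pos _) hnlow
    have hlognC : 2*C+1 ≤ Real.log (n:ℝ) := by linarith
    have hloglog : 1 ≤ Real.log (Real.log (n:ℝ)) := by
      calc (1:ℝ) = Real.log (Real.exp 1) := (Real.log_exp 1).symm
        _ ≤ Real.log (Real.log (n:ℝ)) :=
          Real.log_le_log (Real.exp_pos 1) (by linarith)
    set D : ℝ := Real.log (n:ℝ) * Real.log (Real.log (n:ℝ)) with hD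
    have hCD : C ≤ D := by
      calc C ≤ (2*C+1) * 1 := by linarith
        _ ≤ Real.log (n:ℝ) * Real.log (Real.log (n:ℝ)) :=
          mul_le_mul hlognC hloglog (by norm_num) (by linarith)
    have hDpos : (0:ℝ) < D := lt_of_lt_of_le (by linarith) hCD
    have hP : (1:ℝ) ≤ 4^j := by
      calc (1:ℝ) = 1^j := (one_pow j).symm
        _ ≤ 4^j := pow_le_pow_left₀ (by norm_num) (by norm_num) j
    have hnup : (n:ℝ) ≤ 4^j := by
      have h1 : (n:ℝ) ≤ Real.exp t := Nat.floor_le (Real.exp_pos t).le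
      have h2 : Real.exp t ≤ Real.exp (j:ℝ) := Real.exp_le_exp.mpr htj
      have h3 : Real.exp (j:ℝ) = Real.exp 1 ^ j := by
        rw [← Real.exp_nat_mul]; norm_num
      have h4 : Real.exp 1 ^ j ≤ 4^j :=
        pow_le_pow_left₀ (Real.exp_pos 1).le (by linarith) j
      linarith [h3 ▸ h2]
    -- digit recursion
    have hdig := hins j hjN0
    rw [← hn] at hdig
    set S : ℝ := ∑ i ∈ Finset.Icc 1 (n - 1), ((digit θ y i : ℤ) : ℝ) with hS
    -- nonnegativity of all digits up to n-1
    have hterm : ∀ i ∈ Finset.Icc 1 (n-1), (0:ℤ) ≤ digit θ y i := by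
      intro i hi
      rw [Finset.mem_Icc] at hi
      by_cases hip : insertedPos N0 i
      · obtain ⟨k, hk, rfl⟩ := hip
        have hkj : k < j := by
          by_contra h
          push_neg at h
          have := sparseSeq_mono h
          rw [← hn] at this
          omega
        exact (IH k hkj hk).1
      · exact le_trans (by positivity) (hbnd i hi.1 hip).1
    have hSnonneg : (0:ℝ) ≤ S :=
      Finset.sum_nonneg (fun i hi => by exact_mod_cast hterm i hi)
    have hdignn : 0 ≤ digit θ y n := by
      rw [hdig]
      exact Int.floor_nonneg.mpr
        (div_nonneg (mul_nonneg hα.le hSnonneg) hDpos.le)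
    -- upper bound on S
    set A : Finset ℕ := (Finset.Icc 1 (n-1)).filter (fun i => insertedPos N0 i) with hA
    set B : Finset ℕ := (Finset.Icc 1 (n-1)).filter (fun i => ¬ insertedPos N0 i) with hB
    have hsplit : (∑ i ∈ A, ((digit θ y i : ℤ):ℝ)) + (∑ i ∈ B, ((digit θ y i : ℤ):ℝ)) = S :=
      Finset.sum_filter_add_sum_filter_not _ _ _
    have hBle : ∑ i ∈ B, ((digit θ y i : ℤ):ℝ) ≤ (M:ℝ) * 4^j := by
      have h1 : ∑ i ∈ B, ((digit θ y i : ℤ):ℝ) ≤ ∑ _i ∈ B, (M:ℝ) := by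
        refine Finset.sum_le_sum (fun i hi => ?_)
        rw [hB, Finset.mem_filter, Finset.mem_Icc] at hi
        exact_mod_cast (hbnd i hi.1.1 hi.2).2
      have h2 : ∑ _i ∈ B, (M:ℝ) = (B.card : ℝ) * M := by
        rw [Finset.sum_const, nsmul_eq_mul]
      have h3 : (B.card : ℝ) ≤ (n:ℝ) := by
        have hc : B.card ≤ n := by
          rw [hB]
          have := Finset.card_filter_le (Finset.Icc 1 (n-1)) (fun i => ¬ insertedPos N0 i)
          rw [Nat.card_Icc] at this
          omega
        exact_mod_cast hc
      calc ∑ i ∈ B, ((digit θ y i : ℤ):ℝ) ≤ (B.card : ℝ) * M := by rw [← h2]; exact h1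
        _ ≤ (n:ℝ) * M := mul_le_mul_of_nonneg_right h3 (Nat.cast_nonneg M)
        _ ≤ (M:ℝ) * 4^j := by
            rw [mul_comm]
            exact mul_le_mul_of_nonneg_left hnup (Nat.cast_nonneg M)
    have hksmall : ∀ k, N0 ≤ k → sparseSeq k ≤ n - 1 → k < j := by
      intro k hk hkle
      by_contra h
      push_neg at h
      have := sparseSeq_mono h
      rw [← hn] at this
      omega
    have hAsub : A ⊆ (Finset.Ico N0 j).image sparseSeq := by
      intro i hi
      rw [hA, Finset.mem_filter, Finset.mem_Icc] at hi
      obtain ⟨⟨hi1, hi2⟩, k, hk, rfl⟩ := hi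
      exact Finset.mem_image.mpr ⟨k, Finset.mem_Ico.mpr ⟨hk, hksmall k hk hi2⟩, rfl⟩
    have himgnn : ∀ i ∈ (Finset.Ico N0 j).image sparseSeq, (0:ℝ) ≤ ((digit θ y i : ℤ):ℝ) := by
      intro i hi
      obtain ⟨k, hk, rfl⟩ := Finset.mem_image.mp hi
      rw [Finset.mem_Ico] at hk
      exact_mod_cast (IH k hk.2 hk.1).1
    have hAle : ∑ i ∈ A, ((digit θ y i : ℤ):ℝ) ≤ 11 * 4^j := by
      calc ∑ i ∈ A, ((digit θ y i : ℤ):ℝ)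
          ≤ ∑ i ∈ (Finset.Ico N0 j).image sparseSeq, ((digit θ y i : ℤ):ℝ) :=
            Finset.sum_le_sum_of_subset_of_nonneg hAsub (fun i hi _ => himgnn i hi)
        _ ≤ ∑ k ∈ Finset.Ico N0 j, ((digit θ y (sparseSeq k) : ℤ):ℝ) :=
            sum_image_le_aux _ _ _ (fun k hk => by
              rw [Finset.mem_Ico] at hk
              exact_mod_cast (IH k hk.2 hk.1).1)
        _ ≤ ∑ k ∈ Finset.Ico N0 j, (2:ℝ)^(2*k+5) :=
            Finset.sum_le_sum (fun k hk => by
              rw [Finset.mem_Ico] at hk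
              exact (IH k hk.2 hk.1).2)
        _ ≤ ∑ k ∈ Finset.range j, (2:ℝ)^(2*k+5) := by
            refine Finset.sum_le_sum_of_subset_of_nonneg ?_ (fun k _ _ => by positivity)
            intro k hk
            rw [Finset.mem_Ico] at hk
            exact Finset.mem_range.mpr hk.2
        _ = ∑ k ∈ Finset.range j, 32 * 4^k := by
            refine Finset.sum_congr rfl (fun k _ => ?_)
            rw [pow_add, pow_mul]; norm_num; ring
        _ = 32 * ((4^j - 1)/(4 - 1)) := by
            rw [← Finset.mul_sum, geom_sum_eq (by norm_num : (4:ℝ) ≠ 1)]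
        _ ≤ 11 * 4^j := by linarith
    have hSle : S ≤ ((M:ℝ) + 11) * 4^j := by
      rw [← hsplit]; linarith
    -- conclude
    have hval : α * S / D ≤ (2:ℝ)^(2*j+5) := by
      have hgoal : (2:ℝ)^(2*j+5) = 32 * 4^j := by
        rw [pow_add, pow_mul]; norm_num; ring
      rw [hgoal, div_le_iff₀ hDpos]
      have h1 : α * S ≤ α * (((M:ℝ)+11) * 4^j) := mul_le_mul_of_nonneg_left hSle hα.le
      have h2 : α * (((M:ℝ)+11) * 4^j) ≤ C * 4^j := by
        have hαM : α * ((M:ℝ)+11) ≤ C := by rw [hCdef]; linarith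
        calc α * (((M:ℝ)+11) * 4^j) = (α * ((M:ℝ)+11)) * 4^j := by ring
          _ ≤ C * 4^j := mul_le_mul_of_nonneg_right hαM (by positivity)
      have h3 : C * 4^j ≤ D * 4^j := mul_le_mul_of_nonneg_right hCD (by positivity)
      nlinarith [mul_nonneg hDpos.le (by positivity : (0:ℝ) ≤ (4:ℝ)^j)]
    refine ⟨hdignn, ?_⟩
    rw [hdig]
    calc ((⌊α * S / D⌋ : ℤ) : ℝ) ≤ α * S / D := Int.floor_le _
      _ ≤ (2:ℝ)^(2*j+5) := hval
  have h := (key j hj).2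
  have h2 : ((2:ℤ)^(2*j+5) : ℝ) = (2:ℝ)^(2*j+5) := by push_cast; ring
  exact_mod_cast h
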